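/- Let x be a real number and let k, n be integers with 1 ≤ k ≤ n. Then Σ_{t=k}^{n} Σ_{j=k}^{t} C(n,t) C(t,j) x^{t+j} (1−x)^{n−j} = Σ_{i=k}^{n} C(n,i) (x²)^i (1−x²)^{n−i}. -/

import Mathlib

/-- Binomial identity: the double sum equals the upper tail of a
binomial distribution with success probability `x²`. -/
theorem stmt_7 (x : ℝ) (k n : ℕ) (hk : 1 ≤ k) (hkn : k ≤ n) :
    ∑ t ∈ Finset.Icc k n, ∑ j ∈ Finset.Icc k t,
        (n.choose t : ℝ) * (t.choose j : ℝ) * x ^ (t + j) * (1 - x) ^ (n - j)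
      = ∑ i ∈ Finset.Icc k n, (n.choose i : ℝ) * (x ^ 2) ^ i * (1 - x ^ 2) ^ (n - i) := by
  have h1 : ∀ t ∈ Finset.Icc k n, ∑ j ∈ Finset.Icc k t,
        (n.choose t : ℝ) * (t.choose j : ℝ) * x ^ (t + j) * (1 - x) ^ (n - j)
      = ∑ j ∈ Finset.Ico k (t+1),
        (n.choose t : ℝ) * (t.choose j : ℝ) * x ^ (t + j) * (1 - x) ^ (n - j) := by
    intro t _
    rw [Finset.Ico_add_one_right_eq_Icc]
  rw [Finset.sum_congr rfl h1, ← Finset.Ico_add_one_right_eq_Icc,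
    ← Finset.sum_Ico_Ico_comm k (n+1)
      (fun j t => (n.choose t : ℝ) * (t.choose j : ℝ) * x ^ (t + j) * (1 - x) ^ (n - j))]
  refine Finset.sum_congr rfl fun j hj => ?_
  rw [Finset.mem_Ico] at hj
  have hjn : j ≤ n := by omega
  rw [Finset.sum_Ico_eq_sum_range]
  have h2 : ∀ s ∈ Finset.range (n + 1 - j),
      (n.choose (j + s) : ℝ) * ((j + s).choose j : ℝ) * x ^ (j + s + j) * (1 - x) ^ (n - j)
      = ((n.choose j : ℝ) * (x ^ 2) ^ j * (1 - x) ^ (n - j)) *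
        (x ^ s * 1 ^ (n - j - s) * ((n - j).choose s : ℝ)) := by
    intro s hs
    rw [Finset.mem_range] at hs
    have hle : j + s ≤ n := by omega
    have hc : n.choose (j + s) * (j + s).choose j = n.choose j * (n - j).choose s := by
      have := Nat.choose_mul (n := n) (Nat.le_add_right j s)
      simpa using this
    have hcR : (n.choose (j + s) : ℝ) * ((j + s).choose j : ℝ)
        = (n.choose j : ℝ) * ((n - j).choose s : ℝ) := by
      exact_mod_cast congrArg (Nat.cast (R := ℝ)) hc
    have hx : x ^ (j + s + j) = (x ^ 2) ^ j * x ^ s := by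
      rw [show j + s + j = 2*j + s from by ring, pow_add, pow_mul]
    rw [hcR, hx]; ring
  rw [Finset.sum_congr rfl h2, ← Finset.mul_sum, show n + 1 - j = n - j + 1 from by omega,
    ← add_pow x 1 (n - j)]
  have : (1 : ℝ) - x ^ 2 = (1 - x) * (x + 1) := by ring
  rw [this, mul_pow]
  ring
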